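/- For a semistandard n-tableau T of shape P/Q, define g(T)_{i,j} := Q_{i+1−j} + #{c : (i+1−j, c) is a cell of P/Q and T(i+1−j, c) ≤ i}, for i ∈ {0,…,n} and j ∈ C_i. Then T ↦ g(T) is a bijection from the set of semistandard n-tableaux of shape P/Q onto the set of GT n-parallelograms framed by P/Q. Moreover, for semistandard n-tableaux S and T of shape P/Q, one has S(r,c) ≥ T(r,c) for every cell (r,c) if and only if g(S)_{i,j} ≤ g(T)_{i,j} for every position (i,j). -/

import Mathlib

open Finset
open scoped Classical

def IsGT (m n : ℕ) (P Q : ℕ → ℤ) (g : ℕ → ℕ → ℤ) : Prop :=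
  (∀ k < m, g 0 k = Q (k + 1)) ∧
  (∀ k < m, g n k = P (k + 1)) ∧
  (∀ i < n, ∀ k < m, g i k ≤ g (i + 1) k) ∧
  (∀ i < n, ∀ k, k + 1 < m → g (i + 1) (k + 1) ≤ g i k) ∧
  (∀ i k, n < i ∨ m ≤ k → g i k = 0)

def ShapeHyps (m n : ℕ) (P Q : ℕ → ℤ) : Prop :=
  2 ≤ n ∧ n ≤ m ∧
  (∀ r, 1 ≤ r → r < m → P (r + 1) ≤ P r) ∧ 0 ≤ P m ∧
  (∀ r, 1 ≤ r → r < m → Q (r + 1) ≤ Q r) ∧ 0 ≤ Q m ∧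
  (∀ r, 1 ≤ r → r ≤ m → Q r ≤ P r) ∧
  (∀ c : ℤ, ((Finset.Icc 1 m).filter (fun r => Q r < c ∧ c ≤ P r)).card ≤ n)
/-- The finite set of cells of the skew shape `P/Q`: pairs `(r,c)` with
`1 ≤ r ≤ m` and `Q_r < c ≤ P_r`. -/
noncomputable def cells (m : ℕ) (P Q : ℕ → ℤ) : Finset (ℕ × ℤ) :=
  (Finset.Icc 1 m ×ˢ Finset.Icc 1 (P 1)).filter fun x => Q x.1 < x.2 ∧ x.2 ≤ P x.1

/-- A semistandard `n`-tableau of skew shape `P/Q`: entries in `{1,…,n}`, rows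
weakly increasing, columns strictly increasing; values outside the cells of the
shape are normalized to `0`. -/
def IsSSYT (m n : ℕ) (P Q : ℕ → ℤ) (T : ℕ × ℤ → ℕ) : Prop :=
  (∀ x ∈ cells m P Q, 1 ≤ T x ∧ T x ≤ n) ∧
  (∀ (r : ℕ) (c : ℤ), (r, c) ∈ cells m P Q → (r, c + 1) ∈ cells m P Q →
    T (r, c) ≤ T (r, c + 1)) ∧
  (∀ (r : ℕ) (c : ℤ), (r, c) ∈ cells m P Q → (r + 1, c) ∈ cells m P Q →
    T (r, c) < T (r + 1, c)) ∧
  (∀ x, x ∉ cells m P Q → T x = 0)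

/-- `#_i(T)`: the number of cells of `T` with entry `i`. -/
noncomputable def entryCount (m : ℕ) (P Q : ℕ → ℤ) (T : ℕ × ℤ → ℕ) (i : ℕ) : ℕ :=
  ((cells m P Q).filter fun x => T x = i).card

/-- The skew Schur polynomial `s_{P/Q}(x_1,…,x_n)`, with the variable `x_{i+1}`
encoded as `MvPolynomial.X (i : Fin n)`. -/
noncomputable def skewSchur (m n : ℕ) (P Q : ℕ → ℤ) : MvPolynomial (Fin n) ℤ :=
  ∑ᶠ T ∈ {T : ℕ × ℤ → ℕ | IsSSYT m n P Q T},
    ∏ i : Fin n, MvPolynomial.X i ^ entryCount m P Q T ((i : ℕ) + 1)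

/-- The GT `n`-parallelogram associated to a tableau `T`:
`g(T)_{i,j} = Q_{i+1-j} + #{c : (i+1-j,c) is a cell and T(i+1-j,c) ≤ i}`,
in slot coordinates (`κ = i - j`, so the relevant row is `κ + 1`). -/
noncomputable def gOf (m n : ℕ) (P Q : ℕ → ℤ) (T : ℕ × ℤ → ℕ) : ℕ → ℕ → ℤ := fun i κ =>
  if i ≤ n ∧ κ < m then
    Q (κ + 1) + ((cells m P Q).filter fun x => x.1 = κ + 1 ∧ T x ≤ i).card
  else 0

section GTAux

variable {m n : ℕ} {P Q : ℕ → ℤ}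

private lemma antiChain {R : ℕ → ℤ} (hR : ∀ r, 1 ≤ r → r < m → R (r + 1) ≤ R r)
    {a b : ℕ} (ha : 1 ≤ a) (hab : a ≤ b) (hbm : b ≤ m) : R b ≤ R a := by
  revert hbm
  induction b, hab using Nat.le_induction with
  | base => exact fun _ => le_rfl
  | succ b hab ih =>
      intro hbm
      exact le_trans (hR b (by omega) (by omega)) (ih (by omega))

private lemma mem_cells (h : ShapeHyps m n P Q) {r : ℕ} {c : ℤ} :
    (r, c) ∈ cells m P Q ↔ 1 ≤ r ∧ r ≤ m ∧ Q r < c ∧ c ≤ P r := by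
  obtain ⟨hn2, hnm, hP, hPm, hQ, hQm, hQP, -⟩ := h
  simp only [cells, Finset.mem_filter, Finset.mem_product, Finset.mem_Icc]
  constructor
  · rintro ⟨⟨⟨h1, h2⟩, -, -⟩, h5, h6⟩
    exact ⟨h1, h2, h5, h6⟩
  · rintro ⟨h1, h2, h3, h4⟩
    have hQr : Q m ≤ Q r := antiChain hQ h1 h2 le_rfl
    have hPr : P r ≤ P 1 := antiChain hP le_rfl h1 h2
    exact ⟨⟨⟨h1, h2⟩, by omega, by omega⟩, h3, h4⟩

private lemma lowerset_iff (s : Finset ℤ) (a : ℤ) (hmem : ∀ c ∈ s, a ≤ c)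
    (hdc : ∀ c ∈ s, ∀ c', a ≤ c' → c' ≤ c → c' ∈ s) (c : ℤ) :
    c ∈ s ↔ a ≤ c ∧ c ≤ a + s.card - 1 := by
  rcases Finset.eq_empty_or_nonempty s with rfl | hne
  · simp only [Finset.notMem_empty, Finset.card_empty, false_iff]
    omega
  · have hx := s.max'_mem hne
    obtain ⟨x, hax, hs⟩ : ∃ x, a ≤ x ∧ ∀ d, d ∈ s ↔ a ≤ d ∧ d ≤ x :=
      ⟨s.max' hne, hmem _ hx, fun d =>
        ⟨fun hd => ⟨hmem d hd, s.le_max' d hd⟩, fun hd => hdc _ hx d hd.1 hd.2⟩⟩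
    have hseq : s = Finset.Icc a x := Finset.ext (by simpa [Finset.mem_Icc] using hs)
    subst hseq
    rw [Int.card_Icc, Finset.mem_Icc]
    omega

private lemma row_mono (h : ShapeHyps m n P Q) {T : ℕ × ℤ → ℕ} (hT : IsSSYT m n P Q T)
    {r : ℕ} (hr1 : 1 ≤ r) (hrm : r ≤ m) {c' c : ℤ} (h1 : Q r < c') (h2 : c' ≤ c)
    (h3 : c ≤ P r) : T (r, c') ≤ T (r, c) := by
  refine Int.le_induction (motive := fun c _ => c ≤ P r → T (r, c') ≤ T (r, c))
    (fun _ => le_rfl) (fun c hc ih h3 => ?_) c h2 h3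
  have hc1 : (r, c) ∈ cells m P Q := (mem_cells h).2 ⟨hr1, hrm, by omega, by omega⟩
  have hc2 : (r, c + 1) ∈ cells m P Q := (mem_cells h).2 ⟨hr1, hrm, by omega, h3⟩
  exact le_trans (ih (by omega)) (hT.2.1 r c hc1 hc2)

private noncomputable def cntAux (m : ℕ) (P Q : ℕ → ℤ) (T : ℕ × ℤ → ℕ) (i r : ℕ) : ℤ :=
  (((cells m P Q).filter fun x => x.1 = r ∧ T x ≤ i).card : ℤ)

private lemma gOf_eq {T : ℕ × ℤ → ℕ} {i κ : ℕ} (hi : i ≤ n) (hκ : κ < m) :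
    gOf m n P Q T i κ = Q (κ + 1) + cntAux m P Q T i (κ + 1) := by
  simp only [gOf, cntAux]
  rw [if_pos (⟨hi, hκ⟩ : i ≤ n ∧ κ < m)]

private lemma key (h : ShapeHyps m n P Q) {T : ℕ × ℤ → ℕ} (hT : IsSSYT m n P Q T)
    {r : ℕ} (hr1 : 1 ≤ r) (hrm : r ≤ m) (i : ℕ) :
    0 ≤ cntAux m P Q T i r ∧ Q r + cntAux m P Q T i r ≤ P r ∧
      ∀ c : ℤ, ((r, c) ∈ cells m P Q ∧ T (r, c) ≤ i) ↔
        Q r < c ∧ c ≤ Q r + cntAux m P Q T i r := by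
  classical
  set s : Finset ℤ := (Finset.Icc (Q r + 1) (P r)).filter (fun c => T (r, c) ≤ i) with hsdef
  have himg : (cells m P Q).filter (fun x => x.1 = r ∧ T x ≤ i) = s.image (fun c => (r, c)) := by
    ext x
    obtain ⟨a, b⟩ := x
    simp only [hsdef, Finset.mem_filter, Finset.mem_image, Finset.mem_Icc, mem_cells h]
    constructor
    · rintro ⟨⟨h1, h2, h3, h4⟩, rfl, h5⟩
      exact ⟨b, ⟨⟨by omega, h4⟩, h5⟩, rfl⟩
    · rintro ⟨d, ⟨⟨hd1, hd2⟩, hd3⟩, hd4⟩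
      injection hd4 with e1 e2
      subst e1; subst e2
      exact ⟨⟨hr1, hrm, by omega, hd2⟩, rfl, hd3⟩
  have hinj : Function.Injective (fun c : ℤ => (r, c)) := by
    intro a b hab
    simpa using congrArg Prod.snd hab
  have hcard : cntAux m P Q T i r = (s.card : ℤ) := by
    rw [cntAux, himg, Finset.card_image_of_injective _ hinj]
  have hmem : ∀ c ∈ s, Q r + 1 ≤ c := by
    intro c hc
    simp only [hsdef, Finset.mem_filter, Finset.mem_Icc] at hc
    exact hc.1.1
  have hdc : ∀ c ∈ s, ∀ c', Q r + 1 ≤ c' → c' ≤ c → c' ∈ s := by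
    intro c hc c' h1' h2'
    simp only [hsdef, Finset.mem_filter, Finset.mem_Icc] at hc ⊢
    exact ⟨⟨h1', le_trans h2' hc.1.2⟩,
      le_trans (row_mono h hT hr1 hrm (by omega) h2' hc.1.2) hc.2⟩
  have hiff := lowerset_iff s (Q r + 1) hmem hdc
  have hQP : Q r ≤ P r := h.2.2.2.2.2.2.1 r hr1 hrm
  have hsub : s.card ≤ (Finset.Icc (Q r + 1) (P r)).card :=
    Finset.card_le_card (hsdef ▸ Finset.filter_subset _ _)
  rw [Int.card_Icc] at hsub
  have hb2 : Q r + cntAux m P Q T i r ≤ P r := by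
    have hcast : (s.card : ℤ) ≤ ((P r + 1 - (Q r + 1)).toNat : ℤ) := by exact_mod_cast hsub
    omega
  refine ⟨by rw [cntAux]; exact Int.natCast_nonneg _, hb2, fun c => ?_⟩
  rw [mem_cells h]
  constructor
  · rintro ⟨⟨-, -, h3, h4⟩, h5⟩
    have hcs : c ∈ s := by
      simp only [hsdef, Finset.mem_filter, Finset.mem_Icc]
      exact ⟨⟨by omega, h4⟩, h5⟩
    rw [hiff c] at hcs
    omega
  · rintro ⟨h1', h2'⟩
    have hcs : c ∈ s := (hiff c).2 ⟨by omega, by omega⟩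
    simp only [hsdef, Finset.mem_filter, Finset.mem_Icc] at hcs
    exact ⟨⟨hr1, hrm, h1', hcs.1.2⟩, hcs.2⟩

private lemma cnt_mono {T : ℕ × ℤ → ℕ} (i r : ℕ) :
    cntAux m P Q T i r ≤ cntAux m P Q T (i + 1) r := by
  simp only [cntAux, Nat.cast_le]
  apply Finset.card_le_card
  intro x hx
  simp only [Finset.mem_filter] at hx ⊢
  exact ⟨hx.1, hx.2.1, by omega⟩

private lemma cnt_zero (h : ShapeHyps m n P Q) {T : ℕ × ℤ → ℕ} (hT : IsSSYT m n P Q T)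
    {r : ℕ} (hr1 : 1 ≤ r) (hrm : r ≤ m) : cntAux m P Q T 0 r = 0 := by
  obtain ⟨h0, h1, h2⟩ := key h hT hr1 hrm 0
  by_contra hne
  have hmm := (h2 (Q r + cntAux m P Q T 0 r)).2 ⟨by omega, le_rfl⟩
  have h1T := hT.1 _ hmm.1
  omega

private lemma cnt_top (h : ShapeHyps m n P Q) {T : ℕ × ℤ → ℕ} (hT : IsSSYT m n P Q T)
    {r : ℕ} (hr1 : 1 ≤ r) (hrm : r ≤ m) : cntAux m P Q T n r = P r - Q r := by
  obtain ⟨h0, h1, h2⟩ := key h hT hr1 hrm n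
  have hQP : Q r ≤ P r := h.2.2.2.2.2.2.1 r hr1 hrm
  rcases lt_or_eq_of_le hQP with hlt | heq
  · have hcell : (r, P r) ∈ cells m P Q := (mem_cells h).2 ⟨hr1, hrm, hlt, le_rfl⟩
    have := (h2 (P r)).1 ⟨hcell, (hT.1 _ hcell).2⟩
    omega
  · omega

private lemma interlace (h : ShapeHyps m n P Q) {T : ℕ × ℤ → ℕ} (hT : IsSSYT m n P Q T)
    {r : ℕ} (hr1 : 1 ≤ r) (hrm : r + 1 ≤ m) (i : ℕ) :
    Q (r + 1) + cntAux m P Q T (i + 1) (r + 1) ≤ Q r + cntAux m P Q T i r := by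
  obtain ⟨ha0, ha1, ha2⟩ := key h hT hr1 (by omega) i
  obtain ⟨hb0, hb1, hb2⟩ := key h hT (by omega : 1 ≤ r + 1) hrm (i + 1)
  by_contra hlt
  push_neg at hlt
  set b := Q (r + 1) + cntAux m P Q T (i + 1) (r + 1) with hbdef
  have hQmono : Q (r + 1) ≤ Q r := h.2.2.2.2.1 r hr1 (by omega)
  obtain ⟨hcell1, hTle1⟩ := (hb2 b).2 ⟨by omega, le_rfl⟩
  obtain ⟨-, -, -, hbP⟩ := (mem_cells h).1 hcell1
  have hPmono : P (r + 1) ≤ P r := h.2.2.1 r hr1 (by omega)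
  have hcellr : (r, b) ∈ cells m P Q := (mem_cells h).2 ⟨hr1, by omega, by omega, by omega⟩
  have hTgt : ¬ T (r, b) ≤ i := fun hh => by
    have := (ha2 b).1 ⟨hcellr, hh⟩
    omega
  have hstrict := hT.2.2.1 r b hcellr hcell1
  omega

private lemma gt_mono {g : ℕ → ℕ → ℤ} (hg : IsGT m n P Q g) {κ : ℕ} (hκ : κ < m)
    {i i' : ℕ} (hii : i ≤ i') (hin : i' ≤ n) : g i κ ≤ g i' κ := by
  revert hin
  induction i', hii using Nat.le_induction with
  | base => exact fun _ => le_rfl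
  | succ i' hii ih =>
      intro hin
      exact le_trans (ih (by omega)) (hg.2.2.1 i' (by omega) κ hκ)

end GTAux

/-- `T ↦ g(T)` is a bijection from semistandard
`n`-tableaux of shape `P/Q` onto GT `n`-parallelograms framed by `P/Q`, and it
is order-reversing in the entries: `S ≥ T` entrywise on cells iff
`g(S) ≤ g(T)` entrywise. -/
theorem tableaux_parallelogram_bijection
    (m n : ℕ) (P Q : ℕ → ℤ) (h : ShapeHyps m n P Q) :
    Set.BijOn (gOf m n P Q)
      {T : ℕ × ℤ → ℕ | IsSSYT m n P Q T}
      {g : ℕ → ℕ → ℤ | IsGT m n P Q g} ∧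
    (∀ S T : ℕ × ℤ → ℕ, IsSSYT m n P Q S → IsSSYT m n P Q T →
      ((∀ x ∈ cells m P Q, T x ≤ S x) ↔
        ∀ i κ, i ≤ n → κ < m → gOf m n P Q S i κ ≤ gOf m n P Q T i κ)) := by
  have hn2 : 2 ≤ n := h.1
  have hnm : n ≤ m := h.2.1
  constructor
  · refine ⟨?_, ?_, ?_⟩
    -- MapsTo
    · intro T hT
      have hT' : IsSSYT m n P Q T := hT
      refine ⟨?_, ?_, ?_, ?_, ?_⟩
      · intro k hk
        rw [gOf_eq (by omega) hk, cnt_zero h hT' (by omega) (by omega)]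
        ring
      · intro k hk
        rw [gOf_eq le_rfl hk, cnt_top h hT' (by omega) (by omega)]
        ring
      · intro i hi k hk
        rw [gOf_eq (by omega) hk, gOf_eq (by omega) hk]
        have := cnt_mono (m := m) (P := P) (Q := Q) (T := T) i (k + 1)
        omega
      · intro i hi k hk
        rw [gOf_eq (by omega) (by omega), gOf_eq (by omega) (by omega)]
        exact interlace h hT' (by omega) (by omega) i
      · intro i k hik
        rw [gOf, if_neg (by omega)]
    -- InjOn
    · intro S hS T hT hg
      have hS' : IsSSYT m n P Q S := hS
      have hT' : IsSSYT m n P Q T := hT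
      funext x
      obtain ⟨r, c⟩ := x
      by_cases hx : (r, c) ∈ cells m P Q
      · obtain ⟨hr1, hrm, hc1, hc2⟩ := (mem_cells h).1 hx
        have hκ : r - 1 < m := by omega
        have hcnt : ∀ i, i ≤ n → cntAux m P Q S i r = cntAux m P Q T i r := by
          intro i hi
          have hfg := congrFun (congrFun hg i) (r - 1)
          rw [gOf_eq hi hκ, gOf_eq hi hκ, show r - 1 + 1 = r from by omega] at hfg
          omega
        have h1 : T (r, c) ≤ S (r, c) := by
          have hi := (hS'.1 _ hx).2
          have ha := ((key h hS' hr1 hrm (S (r, c))).2.2 c).1 ⟨hx, le_rfl⟩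
          exact (((key h hT' hr1 hrm (S (r, c))).2.2 c).2
            ⟨ha.1, by rw [← hcnt _ hi]; omega⟩).2
        have h2 : S (r, c) ≤ T (r, c) := by
          have hi := (hT'.1 _ hx).2
          have ha := ((key h hT' hr1 hrm (T (r, c))).2.2 c).1 ⟨hx, le_rfl⟩
          exact (((key h hS' hr1 hrm (T (r, c))).2.2 c).2
            ⟨ha.1, by rw [hcnt _ hi]; omega⟩).2
        omega
      · rw [hS'.2.2.2 _ hx, hT'.2.2.2 _ hx]
    -- SurjOn
    · intro g hgm
      have hg : IsGT m n P Q g := hgm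
      obtain ⟨hg1, hg2, hg3, hg4, hg5⟩ := hg
      set T : ℕ × ℤ → ℕ := fun x =>
        if x ∈ cells m P Q then sInf {i : ℕ | 1 ≤ i ∧ x.2 ≤ g i (x.1 - 1)} else 0 with hTdef
      have hspec : ∀ r : ℕ, ∀ c : ℤ, (r, c) ∈ cells m P Q →
          (1 ≤ T (r, c) ∧ c ≤ g (T (r, c)) (r - 1)) ∧
          ∀ i, 1 ≤ i → c ≤ g i (r - 1) → T (r, c) ≤ i := by
        intro r c hx
        obtain ⟨hr1, hrm, hc1, hc2⟩ := (mem_cells h).1 hx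
        have hTv : T (r, c) = sInf {i : ℕ | 1 ≤ i ∧ c ≤ g i (r - 1)} := by
          rw [hTdef]
          simp only [if_pos hx]
        have hne : sInf {i : ℕ | 1 ≤ i ∧ c ≤ g i (r - 1)} ∈
            {i : ℕ | 1 ≤ i ∧ c ≤ g i (r - 1)} := by
          apply Nat.sInf_mem
          refine ⟨n, by omega, ?_⟩
          have hgn := hg2 (r - 1) (by omega)
          rw [show r - 1 + 1 = r from by omega] at hgn
          omega
        refine ⟨?_, ?_⟩
        · rw [hTv]; exact hne
        · intro i hi hci
          rw [hTv]
          exact Nat.sInf_le ⟨hi, hci⟩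
      have hTrange : ∀ x ∈ cells m P Q, 1 ≤ T x ∧ T x ≤ n := by
        intro x hx
        obtain ⟨r, c⟩ := x
        obtain ⟨hr1, hrm, hc1, hc2⟩ := (mem_cells h).1 hx
        obtain ⟨⟨ha, hb⟩, hmin⟩ := hspec r c hx
        refine ⟨ha, hmin n (by omega) ?_⟩
        have hgn := hg2 (r - 1) (by omega)
        rw [show r - 1 + 1 = r from by omega] at hgn
        omega
      have hTssyt : IsSSYT m n P Q T := by
        refine ⟨hTrange, ?_, ?_, ?_⟩
        · intro r c h1 h2
          obtain ⟨⟨ha, hb⟩, -⟩ := hspec r (c + 1) h2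
          exact (hspec r c h1).2 _ ha (by omega)
        · intro r c h1 h2
          obtain ⟨hr1, hrm, hc1, hc2⟩ := (mem_cells h).1 h1
          obtain ⟨hr1', hrm', hc1', hc2'⟩ := (mem_cells h).1 h2
          obtain ⟨⟨ha, hb⟩, -⟩ := hspec (r + 1) c h2
          rw [show r + 1 - 1 = r from by omega] at hb
          have hjn : T (r + 1, c) ≤ n := (hTrange _ h2).2
          have hj2 : 2 ≤ T (r + 1, c) := by
            by_contra hj
            have hj1 : T (r + 1, c) = 1 := by omega
            rw [hj1] at hb
            have h4 := hg4 0 (by omega) (r - 1) (by omega)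
            rw [show r - 1 + 1 = r from by omega, show (0 : ℕ) + 1 = 1 from rfl] at h4
            have h0 := hg1 (r - 1) (by omega)
            rw [show r - 1 + 1 = r from by omega] at h0
            omega
          have h4 := hg4 (T (r + 1, c) - 1) (by omega) (r - 1) (by omega)
          rw [show r - 1 + 1 = r from by omega,
            show T (r + 1, c) - 1 + 1 = T (r + 1, c) from by omega] at h4
          have hfin := (hspec r c h1).2 (T (r + 1, c) - 1) (by omega) (by omega)
          omega
        · intro x hx
          rw [hTdef]
          simp only [if_neg hx]
      refine ⟨T, hTssyt, ?_⟩
      funext i κ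
      by_cases hik : i ≤ n ∧ κ < m
      · obtain ⟨hi, hκ⟩ := hik
        rw [gOf_eq hi hκ]
        have hr1 : 1 ≤ κ + 1 := by omega
        have hrm : κ + 1 ≤ m := by omega
        obtain ⟨hc0, hcP, hkey⟩ := key h hTssyt hr1 hrm i
        have hg0 := hg1 κ hκ
        have hgn := hg2 κ hκ
        have hgb1 : Q (κ + 1) ≤ g i κ := by
          have := gt_mono ⟨hg1, hg2, hg3, hg4, hg5⟩ hκ (Nat.zero_le i) hi
          omega
        have hgb2 : g i κ ≤ P (κ + 1) := by
          have := gt_mono ⟨hg1, hg2, hg3, hg4, hg5⟩ hκ hi le_rfl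
          omega
        have hiff2 : ∀ c : ℤ, ((κ + 1, c) ∈ cells m P Q ∧ T (κ + 1, c) ≤ i) ↔
            Q (κ + 1) < c ∧ c ≤ g i κ := by
          intro c
          constructor
          · rintro ⟨hcell, hTle⟩
            obtain ⟨-, -, h3, h4⟩ := (mem_cells h).1 hcell
            obtain ⟨⟨ha, hb⟩, -⟩ := hspec (κ + 1) c hcell
            rw [show κ + 1 - 1 = κ from by omega] at hb
            have hTn : T (κ + 1, c) ≤ n := (hTrange _ hcell).2
            exact ⟨h3, le_trans hb (gt_mono ⟨hg1, hg2, hg3, hg4, hg5⟩ hκ hTle hi)⟩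
          · rintro ⟨h1', h2'⟩
            have hcell : (κ + 1, c) ∈ cells m P Q :=
              (mem_cells h).2 ⟨hr1, hrm, h1', by omega⟩
            refine ⟨hcell, ?_⟩
            rcases Nat.eq_zero_or_pos i with rfl | hi1
            · omega
            · exact (hspec (κ + 1) c hcell).2 i hi1
                (by rw [show κ + 1 - 1 = κ from by omega]; exact h2')
        have hcomb : ∀ c : ℤ, (Q (κ + 1) < c ∧ c ≤ Q (κ + 1) + cntAux m P Q T i (κ + 1)) ↔
            Q (κ + 1) < c ∧ c ≤ g i κ := fun c => (hkey c).symm.trans (hiff2 c)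
        have e1 := hcomb (Q (κ + 1) + cntAux m P Q T i (κ + 1))
        have e2 := hcomb (g i κ)
        omega
      · rw [gOf, if_neg hik]
        exact (hg5 i κ (by omega)).symm
  -- order-reversing
  · intro S T hS hT
    constructor
    · intro hle i κ hi hκ
      rw [gOf_eq hi hκ, gOf_eq hi hκ]
      have hcc : cntAux m P Q S i (κ + 1) ≤ cntAux m P Q T i (κ + 1) := by
        simp only [cntAux, Nat.cast_le]
        apply Finset.card_le_card
        intro x hx
        simp only [Finset.mem_filter] at hx ⊢
        exact ⟨hx.1, hx.2.1, le_trans (hle x hx.1) hx.2.2⟩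
      omega
    · intro hge x hx
      obtain ⟨r, c⟩ := x
      obtain ⟨hr1, hrm, hc1, hc2⟩ := (mem_cells h).1 hx
      have hi : S (r, c) ≤ n := (hS.1 _ hx).2
      have hκ : r - 1 < m := by omega
      have hG := hge (S (r, c)) (r - 1) hi hκ
      rw [gOf_eq hi hκ, gOf_eq hi hκ, show r - 1 + 1 = r from by omega] at hG
      have h1 := ((key h hS hr1 hrm (S (r, c))).2.2 c).1 ⟨hx, le_rfl⟩
      exact (((key h hT hr1 hrm (S (r, c))).2.2 c).2 ⟨h1.1, by omega⟩).2
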